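/- For every integer $n \ge 2$: $\sum_{k=0}^{n} (4k-1)^3 \frac{(-\frac{1}{2})_k^2\,(-n)_k\,(n-1)_k}{(1)_k^2\,(n+\frac{1}{2})_k\,(\frac{3}{2}-n)_k}\; \sum_{j=1}^{k}\left(\frac{1}{4j^2} - \frac{1}{(2j-3)^2}\right) = \frac{(2n-1)^2 (7n^2 - 7n + 1)}{4 n^2 (n-1)^2}$. -/

import Mathlib

open Finset

/-- Pochhammer symbol `(a)_k = a(a+1)⋯(a+k-1)` for a rational `a`. -/
def poch (a : ℚ) (k : ℕ) : ℚ := ∏ i ∈ Finset.range k, (a + i)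

/-- Euler numbers, defined by `∑ E_n x^n/n! = 2e^x/(e^{2x}+1) = sech x`. -/
def eulerNumber : ℕ → ℤ
  | 0 => 1
  | n + 1 =>
    -∑ k ∈ (Finset.range (n + 1)).attach,
      if Even (n + 1 - k.1) then ((n + 1).choose k.1 : ℤ) * eulerNumber k.1 else 0
  decreasing_by exact Finset.mem_range.mp k.2

/-- `x ≡ y (mod p^m)` for rationals: `v_p(x - y) ≥ m` (with `x = y` allowed). -/
def ratCongr (p m : ℕ) (x y : ℚ) : Prop :=
  x = y ∨ (m : ℤ) ≤ padicValRat p (x - y)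

/- Auxiliary material for the proof. -/

def Apoly (N K : ℚ) : ℚ :=
  4*N^2*(N-1)^2 * (K^2 * ((28*N^4 - 56*N^3 + 39*N^2 - 11*N + 1)
    + (-96*N^4 + 192*N^3 - 132*N^2 + 36*N - 3) * K
    + (64*N^4 - 128*N^3 + 60*N^2 + 4*N - 2) * K^2
    + (96*N^2 - 96*N + 12) * K^3
    + (-64*N^2 + 64*N - 8) * K^4))

def Bpoly (N K : ℚ) : ℚ :=
  N^2*(N-1)^2*(-1 + 11*N - 39*N^2 + 56*N^3 - 28*N^4)
   + K * (N^2*(N-1)^2*(3 - 36*N + 132*N^2 - 192*N^3 + 96*N^4))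
   + K^2 * (1 - 13*N + 64*N^2 - 126*N^3 - 69*N^4 + 696*N^5 - 1128*N^6 + 768*N^7 - 192*N^8)
   + K^3 * (-3 + 42*N - 246*N^2 + 792*N^3 - 1356*N^4 + 1152*N^5 - 384*N^6)
   + K^4 * (-2 + 8*N + 76*N^2 - 552*N^3 + 1236*N^4 - 1152*N^5 + 384*N^6)
   + K^5 * (12 - 120*N + 408*N^2 - 576*N^3 + 288*N^4)
   + K^6 * (-8 + 80*N - 272*N^2 + 384*N^3 - 192*N^4)

set_option maxHeartbeats 4000000 in
lemma keyId (N K H : ℚ) (hK1 : (K+1) ≠ 0)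
    (hP : (N + 1/2) + K ≠ 0) (hQ : (3/2 - N) + K ≠ 0) (h2k : 2*K - 1 ≠ 0) :
  ((-(1/2)+K)^2 * (-N+K) * ((N-1)+K)) / ((K+1)^2 * ((N+1/2)+K) * ((3/2-N)+K)) *
    (Apoly N (K+1) * (H + (1/(4*(K+1)^2) - 1/(2*(K+1)-3)^2)) + Bpoly N (K+1))
  = Apoly N K * H + Bpoly N K + 4*N^4*(N-1)^4*(4*K-1)^3 * H := by
  have h2k' : 2*(K+1)-3 ≠ 0 := by intro h; apply h2k; linarith
  have hD : ((K+1)^2 * ((N+1/2)+K) * ((3/2-N)+K)) ≠ 0 :=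
    mul_ne_zero (mul_ne_zero (pow_ne_zero _ hK1) hP) hQ
  have hD2 : (4*(K+1)^2*(2*(K+1)-3)^2) ≠ 0 := by
    refine mul_ne_zero (mul_ne_zero (by norm_num) (pow_ne_zero _ hK1)) (pow_ne_zero _ h2k')
  have hsub : (H + (1/(4*(K+1)^2) - 1/(2*(K+1)-3)^2))
      = (H * (4*(K+1)^2*(2*(K+1)-3)^2) + ((2*(K+1)-3)^2 - 4*(K+1)^2)) / (4*(K+1)^2*(2*(K+1)-3)^2) := by
    rw [eq_div_iff hD2]
    have h2k'' : (K+1)*2-3 ≠ 0 := by intro h; apply h2k'; linarith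
    field_simp
  rw [hsub, mul_div_assoc', div_add' _ _ _ hD2, div_mul_div_comm, div_eq_iff (mul_ne_zero hD hD2)]
  unfold Apoly Bpoly
  ring

set_option maxHeartbeats 4000000 in
lemma keyId' (N K H : ℚ) (hN : N ≠ 0) (hN1 : N - 1 ≠ 0) (hK1 : (K+1) ≠ 0)
    (hP : (N + 1/2) + K ≠ 0) (hQ : (3/2 - N) + K ≠ 0) (h2k : 2*K - 1 ≠ 0) :
  ((-(1/2)+K)^2 * (-N+K) * ((N-1)+K)) / ((K+1)^2 * ((N+1/2)+K) * ((3/2-N)+K)) *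
    ((Apoly N (K+1) * (H + (1/(4*(K+1)^2) - 1/(2*(K+1)-3)^2)) + Bpoly N (K+1)) / (4*N^4*(N-1)^4))
  = (Apoly N K * H + Bpoly N K) / (4*N^4*(N-1)^4) + (4*K-1)^3 * H := by
  have hc : (4*N^4*(N-1)^4) ≠ 0 := by
    exact mul_ne_zero (mul_ne_zero (by norm_num) (pow_ne_zero _ hN)) (pow_ne_zero _ hN1)
  rw [mul_div_assoc', keyId N K H hK1 hP hQ h2k, div_add' _ _ _ hc]
  congr 1
  ring

lemma poch_succ (a : ℚ) (m : ℕ) : poch a (m+1) = poch a m * (a + m) :=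
  Finset.prod_range_succ _ _

lemma pochD_ne (n m : ℕ) : poch ((n:ℚ)+1/2) m ≠ 0 := by
  unfold poch
  refine ne_of_gt (Finset.prod_pos ?_)
  intro i _
  positivity

lemma pochE_ne (n m : ℕ) : poch (3/2-(n:ℚ)) m ≠ 0 := by
  unfold poch
  rw [Finset.prod_ne_zero_iff]
  intro i _
  intro h
  have h2 : ((2*i+3 : ℕ) : ℚ) = ((2*n : ℕ) : ℚ) := by push_cast; linarith
  have h3 : 2*i+3 = 2*n := Nat.cast_injective h2
  omega

set_option maxHeartbeats 4000000 in
lemma partialSum (n : ℕ) (hn : 2 ≤ n) :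
    ∀ m : ℕ, m ≤ n + 1 →
    ∑ k ∈ Finset.range m,
      (4 * k - 1 : ℚ) ^ 3 * (poch (-(1/2)) k ^ 2 * poch (-(n : ℚ)) k * poch ((n : ℚ) - 1) k) /
        ((k.factorial : ℚ) ^ 2 * poch ((n : ℚ) + 1/2) k * poch (3/2 - (n : ℚ)) k) *
        (∑ j ∈ Finset.Icc 1 k, (1 / (4 * (j : ℚ) ^ 2) - 1 / (2 * (j : ℚ) - 3) ^ 2))
    = (poch (-(1/2)) m ^ 2 * poch (-(n : ℚ)) m * poch ((n : ℚ) - 1) m) /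
        ((m.factorial : ℚ) ^ 2 * poch ((n : ℚ) + 1/2) m * poch (3/2 - (n : ℚ)) m) *
        ((Apoly (n:ℚ) m * (∑ j ∈ Finset.Icc 1 m, (1 / (4 * (j : ℚ) ^ 2) - 1 / (2 * (j : ℚ) - 3) ^ 2))
            + Bpoly (n:ℚ) m) / (4*(n:ℚ)^4*((n:ℚ)-1)^4))
      + (2 * (n : ℚ) - 1) ^ 2 * (7 * n ^ 2 - 7 * n + 1) / (4 * n ^ 2 * ((n : ℚ) - 1) ^ 2) := by
  have hn2 : (2:ℚ) ≤ (n:ℚ) := by exact_mod_cast hn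
  have hN : (n:ℚ) ≠ 0 := by intro h; rw [h] at hn2; norm_num at hn2
  have hN1 : (n:ℚ) - 1 ≠ 0 := by intro h; nlinarith
  intro m
  induction m with
  | zero =>
      intro _
      simp only [Finset.sum_range_zero, Nat.factorial_zero]
      unfold poch Apoly Bpoly
      simp only [Finset.prod_range_zero, Nat.cast_one]
      norm_num
      field_simp
      ring
  | succ m ih =>
      intro hm
      have hm' : m ≤ n + 1 := by omega
      have hK1 : ((m:ℚ)+1) ≠ 0 := by positivity
      have hP : (((n:ℚ) + 1/2) + m) ≠ 0 := by positivity
      have hQ : ((3/2 - (n:ℚ)) + m) ≠ 0 := by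
        intro h
        have h2 : ((2*m+3 : ℕ) : ℚ) = ((2*n : ℕ) : ℚ) := by push_cast; linarith
        have h3 : 2*m+3 = 2*n := Nat.cast_injective h2
        omega
      have h2k : 2*(m:ℚ) - 1 ≠ 0 := by
        intro h
        have h2 : ((2*m : ℕ) : ℚ) = ((1 : ℕ) : ℚ) := by push_cast; linarith
        have h3 : 2*m = 1 := Nat.cast_injective h2
        omega
      have hf : ((m.factorial : ℚ)) ≠ 0 := Nat.cast_ne_zero.mpr m.factorial_ne_zero
      have hFF : poch (-(1/2)) (m+1) ^ 2 * poch (-(n:ℚ)) (m+1) * poch ((n:ℚ)-1) (m+1) /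
            (((m+1).factorial : ℚ)^2 * poch ((n:ℚ)+1/2) (m+1) * poch (3/2-(n:ℚ)) (m+1))
          = (poch (-(1/2)) m ^ 2 * poch (-(n:ℚ)) m * poch ((n:ℚ)-1) m /
              ((m.factorial : ℚ)^2 * poch ((n:ℚ)+1/2) m * poch (3/2-(n:ℚ)) m)) *
            (((-(1/2)+(m:ℚ))^2 * (-(n:ℚ)+(m:ℚ)) * (((n:ℚ)-1)+(m:ℚ))) /
              (((m:ℚ)+1)^2 * ((((n:ℚ)+1/2))+(m:ℚ)) * (((3/2-(n:ℚ)))+(m:ℚ)))) := by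
        simp only [poch_succ, Nat.factorial_succ]
        push_cast
        rw [div_mul_div_comm]
        congr 1
        · ring
        · ring
      have hS : (∑ j ∈ Finset.Icc 1 (m+1), (1 / (4 * (j : ℚ) ^ 2) - 1 / (2 * (j : ℚ) - 3) ^ 2))
          = (∑ j ∈ Finset.Icc 1 m, (1 / (4 * (j : ℚ) ^ 2) - 1 / (2 * (j : ℚ) - 3) ^ 2))
            + (1/(4*((m:ℚ)+1)^2) - 1/(2*((m:ℚ)+1)-3)^2) := by
        rw [Finset.sum_Icc_succ_top (Nat.succ_le_succ (Nat.zero_le m))]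
        push_cast
        ring
      have hkey2 : (((-(1/2)+(m:ℚ))^2 * (-(n:ℚ)+(m:ℚ)) * (((n:ℚ)-1)+(m:ℚ))) /
              (((m:ℚ)+1)^2 * ((((n:ℚ)+1/2))+(m:ℚ)) * (((3/2-(n:ℚ)))+(m:ℚ)))) *
            ((Apoly (n:ℚ) ((m+1 : ℕ) : ℚ) *
                (∑ j ∈ Finset.Icc 1 (m+1), (1 / (4 * (j : ℚ) ^ 2) - 1 / (2 * (j : ℚ) - 3) ^ 2))
              + Bpoly (n:ℚ) ((m+1 : ℕ) : ℚ)) / (4*(n:ℚ)^4*((n:ℚ)-1)^4))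
          = (Apoly (n:ℚ) (m:ℚ) *
                (∑ j ∈ Finset.Icc 1 m, (1 / (4 * (j : ℚ) ^ 2) - 1 / (2 * (j : ℚ) - 3) ^ 2))
              + Bpoly (n:ℚ) (m:ℚ)) / (4*(n:ℚ)^4*((n:ℚ)-1)^4)
            + (4*(m:ℚ)-1)^3 *
                (∑ j ∈ Finset.Icc 1 m, (1 / (4 * (j : ℚ) ^ 2) - 1 / (2 * (j : ℚ) - 3) ^ 2)) := by
        rw [hS]
        push_cast
        exact keyId' (n:ℚ) (m:ℚ)
          (∑ j ∈ Finset.Icc 1 m, (1 / (4 * (j : ℚ) ^ 2) - 1 / (2 * (j : ℚ) - 3) ^ 2))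
          hN hN1 hK1 hP hQ h2k
      rw [Finset.sum_range_succ, ih hm', hFF,
        mul_assoc (poch (-(1/2)) m ^ 2 * poch (-(n:ℚ)) m * poch ((n:ℚ)-1) m /
          ((m.factorial : ℚ)^2 * poch ((n:ℚ)+1/2) m * poch (3/2-(n:ℚ)) m)), hkey2]
      ring

theorem stmt15 (n : ℕ) (hn : 2 ≤ n) :
    ∑ k ∈ Finset.range (n + 1),
      (4 * k - 1 : ℚ) ^ 3 * (poch (-(1/2)) k ^ 2 * poch (-(n : ℚ)) k * poch ((n : ℚ) - 1) k) /
        ((k.factorial : ℚ) ^ 2 * poch ((n : ℚ) + 1/2) k * poch (3/2 - (n : ℚ)) k) *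
        (∑ j ∈ Finset.Icc 1 k, (1 / (4 * (j : ℚ) ^ 2) - 1 / (2 * (j : ℚ) - 3) ^ 2)) =
      (2 * (n : ℚ) - 1) ^ 2 * (7 * n ^ 2 - 7 * n + 1) / (4 * n ^ 2 * ((n : ℚ) - 1) ^ 2) := by
  have hB : poch (-(n:ℚ)) (n+1) = 0 := by
    unfold poch
    apply Finset.prod_eq_zero (Finset.self_mem_range_succ n)
    ring
  rw [partialSum n hn (n+1) le_rfl, hB]
  simp
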